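/- Let d be a differential of degree 1 and δ a differential of degree −1 on E such that [d,δ] = d∘δ + δ∘d is invertible. Then ∏_{i=p}^{q} det([d,δ]|_{E^i})^{(−1)^i} = 1. (First identity of Theorem 2.8.) -/

import Mathlib

open LinearMap

/-- det of a product map is the product of dets. -/
lemma aux_det_prodMap {M₁ M₂ : Type} [AddCommGroup M₁] [Module ℂ M₁] [FiniteDimensional ℂ M₁]
    [AddCommGroup M₂] [Module ℂ M₂] [FiniteDimensional ℂ M₂]
    (f : M₁ →ₗ[ℂ] M₁) (g : M₂ →ₗ[ℂ] M₂) :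
    LinearMap.det (f.prodMap g) = LinearMap.det f * LinearMap.det g := by
  classical
  let b₁ := Module.finBasis ℂ M₁
  let b₂ := Module.finBasis ℂ M₂
  rw [← LinearMap.det_toMatrix (b₁.prod b₂), ← LinearMap.det_toMatrix b₁,
    ← LinearMap.det_toMatrix b₂, LinearMap.toMatrix_prodMap b₁ b₂ f g,
    Matrix.det_fromBlocks_zero₂₁]

/-- The determinant of the restriction of `f` to the range of an idempotent `π`
(encoded as any endomorphism `r` of `range π` agreeing with `f` there) equals
`det (f * π + 1 - π)`. -/
lemma aux_det_restrict {V : Type} [AddCommGroup V] [Module ℂ V] [FiniteDimensional ℂ V]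
    (π f : Module.End ℂ V) (hπ : π * π = π)
    (r : (LinearMap.range π : Submodule ℂ V) →ₗ[ℂ] (LinearMap.range π : Submodule ℂ V))
    (hr : ∀ x : LinearMap.range π, (r x : V) = f (x : V)) :
    LinearMap.det r = LinearMap.det (f * π + 1 - π) := by
  classical
  have hmem : ∀ v : V, π v ∈ LinearMap.range π := fun v => LinearMap.mem_range_self _ v
  set pr : V →ₗ[ℂ] LinearMap.range π := LinearMap.codRestrict (LinearMap.range π) π hmem with hpr
  have hidem' : ∀ y : V, π (π y) = π y :=
    fun y => congrFun (congrArg (fun (a : Module.End ℂ V) => (a : V → V)) hπ) y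
  have hπx : ∀ x : LinearMap.range π, π (x : V) = (x : V) := by
    rintro ⟨x, hx⟩; obtain ⟨y, rfl⟩ := hx; exact hidem' y
  have hprx : ∀ x : LinearMap.range π, pr x = x := by
    intro x
    apply Subtype.ext
    show π (x : V) = (x : V)
    exact hπx x
  have hcompl : IsCompl (LinearMap.range π) (LinearMap.ker pr) := LinearMap.isCompl_of_proj hprx
  set e := Submodule.prodEquivOfIsCompl (LinearMap.range π) (LinearMap.ker pr) hcompl with he
  have hπy : ∀ y : LinearMap.ker pr, π (y : V) = 0 := by
    rintro ⟨y, hy⟩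
    have h1 : pr y = 0 := hy
    have h2 := congrArg (fun z : LinearMap.range π => (z : V)) h1
    simpa [hpr] using h2
  have key : (f * π + 1 - π) ∘ₗ (e : LinearMap.range π × LinearMap.ker pr →ₗ[ℂ] V)
      = (e : LinearMap.range π × LinearMap.ker pr →ₗ[ℂ] V) ∘ₗ (r.prodMap LinearMap.id) := by
    apply LinearMap.ext
    rintro ⟨x, y⟩
    have hex : e (x, y) = (x : V) + (y : V) := Submodule.coe_prodEquivOfIsCompl' _ _ _ _
    have hex2 : e (r x, y) = ((r x : V)) + (y : V) := Submodule.coe_prodEquivOfIsCompl' _ _ _ _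
    simp only [LinearMap.comp_apply, LinearEquiv.coe_coe, LinearMap.prodMap_apply,
      LinearMap.id_apply, hex, hex2]
    show f (π ((x : V) + y)) + ((x : V) + y) - π ((x : V) + y) = (r x : V) + (y : V)
    rw [map_add, hπx x, hπy y, add_zero, hr]
    abel
  have hDeq : (f * π + 1 - π)
      = (e : LinearMap.range π × LinearMap.ker pr →ₗ[ℂ] V) ∘ₗ (r.prodMap LinearMap.id)
        ∘ₗ ((e.symm : V →ₗ[ℂ] LinearMap.range π × LinearMap.ker pr)) := by
    rw [← LinearMap.comp_assoc, ← key, LinearMap.comp_assoc]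
    ext v
    simp
  rw [hDeq, LinearMap.det_conj, aux_det_prodMap, LinearMap.det_id, mul_one]

theorem stmt6 {V : Type} [AddCommGroup V] [Module ℂ V] [FiniteDimensional ℂ V]
    (p q : ℤ) (hpq : p ≤ q) (π : ℤ → Module.End ℂ V)
    (hidem : ∀ i, π i * π i = π i)
    (horth : ∀ i j, i ≠ j → π i * π j = 0)
    (hsupp : ∀ i, i ∉ Finset.Icc p q → π i = 0)
    (hsum : ∑ i ∈ Finset.Icc p q, π i = 1)
    (d δ : Module.End ℂ V)
    (hd : ∀ i, d * π i = π (i + 1) * d)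
    (hδ : ∀ i, δ * π i = π (i - 1) * δ)
    (hdd : d * d = 0)
    (hδδ : δ * δ = 0)
    (hinv : IsUnit (d * δ + δ * d)) :
    ∀ r : ∀ i : ℤ, (LinearMap.range (π i) : Submodule ℂ V) →ₗ[ℂ]
        (LinearMap.range (π i) : Submodule ℂ V),
      (∀ (i : ℤ) (x : LinearMap.range (π i)), (r i x : V) = (d * δ + δ * d) (x : V)) →
      ∏ i ∈ Finset.Icc p q, LinearMap.det (r i) ^ (Int.negOnePow i : ℤ) = 1 := by
  intro r hr
  classical
  set Δ : Module.End ℂ V := d * δ + δ * d with hΔdef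
  have hπd : ∀ i, π i * d = d * π (i - 1) := by
    intro i
    have h := hd (i - 1)
    have h2 : i - 1 + 1 = i := by ring
    rw [h2] at h
    exact h.symm
  have hπδ : ∀ i, π i * δ = δ * π (i + 1) := by
    intro i
    have h := hδ (i + 1)
    have h2 : i + 1 - 1 = i := by ring
    rw [h2] at h
    exact h.symm
  have hΔπ : ∀ i, Δ * π i = π i * Δ := by
    intro i
    have h1 : (d * δ) * π i = π i * (d * δ) := by
      rw [mul_assoc, hδ i, ← mul_assoc, ← hπd i, mul_assoc]
    have h2 : (δ * d) * π i = π i * (δ * d) := by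
      rw [mul_assoc, hd i, ← mul_assoc, ← hπδ i, mul_assoc]
    simp only [hΔdef, add_mul, mul_add, h1, h2]
  obtain ⟨u, hu⟩ := hinv
  set Δ' : Module.End ℂ V := ((u⁻¹ : (Module.End ℂ V)ˣ) : Module.End ℂ V) with hΔ'
  have hΔΔ' : Δ * Δ' = 1 := by rw [← hu, hΔ']; exact u.mul_inv
  have hΔ'Δ : Δ' * Δ = 1 := by rw [← hu, hΔ']; exact u.inv_mul
  set Se : Finset ℤ := (Finset.Icc p q).filter (fun i => i % 2 = 0) with hSe
  set So : Finset ℤ := (Finset.Icc p q).filter (fun i => ¬ i % 2 = 0) with hSo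
  set ε : Module.End ℂ V := ∑ i ∈ Se, π i with hε
  set η : Module.End ℂ V := ∑ i ∈ So, π i with hη
  have hεη : ε + η = 1 := by
    rw [hε, hη, hSe, hSo, Finset.sum_filter_add_sum_filter_not]
    exact hsum
  have hΔε : Δ * ε = ε * Δ := by
    rw [hε, Finset.mul_sum, Finset.sum_mul]
    exact Finset.sum_congr rfl fun i _ => hΔπ i
  have hΔη : Δ * η = η * Δ := by
    rw [hη, Finset.mul_sum, Finset.sum_mul]
    exact Finset.sum_congr rfl fun i _ => hΔπ i
  have horthS : ∀ (A B : Finset ℤ), (∀ i ∈ A, ∀ j ∈ B, i ≠ j) →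
      (∑ i ∈ A, π i) * (∑ j ∈ B, π j) = 0 := by
    intro A B hAB
    rw [Finset.sum_mul_sum]
    apply Finset.sum_eq_zero
    intro i hi
    apply Finset.sum_eq_zero
    intro j hj
    exact horth i j (hAB i hi j hj)
  have hSeSo : ∀ i ∈ Se, ∀ j ∈ So, i ≠ j := by
    intro i hi j hj hij
    rw [hSe, Finset.mem_filter] at hi
    rw [hSo, Finset.mem_filter] at hj
    exact hj.2 (hij ▸ hi.2)
  have hεη0 : ε * η = 0 := horthS Se So hSeSo
  have hηε0 : η * ε = 0 := horthS So Se (fun i hi j hj hij => hSeSo j hj i hi hij.symm)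
  have hidemS : ∀ (A : Finset ℤ), (∑ i ∈ A, π i) * (∑ j ∈ A, π j) = ∑ i ∈ A, π i := by
    intro A
    rw [Finset.sum_mul_sum]
    apply Finset.sum_congr rfl
    intro i hi
    rw [Finset.sum_eq_single_of_mem i hi]
    · exact hidem i
    · intro j _ hji
      exact horth i j (fun h => hji h.symm)
  have hηη : η * η = η := hidemS So
  have hεε : ε * ε = ε := hidemS Se
  -- commutation of ε, η with Δ'
  have hεΔ' : ε * Δ' = Δ' * ε := by
    calc ε * Δ' = (Δ' * Δ) * (ε * Δ') := by rw [hΔ'Δ, one_mul]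
      _ = Δ' * ((Δ * ε) * Δ') := by rw [mul_assoc, mul_assoc]
      _ = Δ' * ((ε * Δ) * Δ') := by rw [hΔε]
      _ = Δ' * ε * (Δ * Δ') := by rw [mul_assoc, mul_assoc]
      _ = Δ' * ε := by rw [hΔΔ', mul_one]
  have hηΔ' : η * Δ' = Δ' * η := by
    calc η * Δ' = (Δ' * Δ) * (η * Δ') := by rw [hΔ'Δ, one_mul]
      _ = Δ' * ((Δ * η) * Δ') := by rw [mul_assoc, mul_assoc]
      _ = Δ' * ((η * Δ) * Δ') := by rw [hΔη]
      _ = Δ' * η * (Δ * Δ') := by rw [mul_assoc, mul_assoc]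
      _ = Δ' * η := by rw [hΔΔ', mul_one]
  -- key commutation: d * ε = η * d and δ * η = ε * δ
  have key1 : d * ε = η * d := by
    have h1 : d * ε = ∑ i ∈ Se, π (i + 1) * d := by
      rw [hε, Finset.mul_sum]
      exact Finset.sum_congr rfl fun i _ => hd i
    have h2 : η * d = ∑ j ∈ So, π j * d := by rw [hη, Finset.sum_mul]
    rw [h1, h2]
    have himg : ∑ j ∈ Se.image (fun i => i + 1), π j * d = ∑ i ∈ Se, π (i + 1) * d :=
      Finset.sum_image (by intro a _ b _ hab; have hab' : a + 1 = b + 1 := hab; omega)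
    rw [← himg]
    set T : Finset ℤ := (Finset.Icc p (q + 1)).filter (fun j => ¬ j % 2 = 0) with hT
    have hzero : ∀ j, π (j - 1) = 0 → π j * d = 0 := by
      intro j hj
      have h := hd (j - 1)
      have h2 : j - 1 + 1 = j := by ring
      rw [h2, hj, mul_zero] at h
      exact h.symm
    have hL : ∑ j ∈ Se.image (fun i => i + 1), π j * d = ∑ j ∈ T, π j * d := by
      apply Finset.sum_subset
      · intro j hj
        rw [Finset.mem_image] at hj
        obtain ⟨i, hi, rfl⟩ := hj
        rw [hSe, Finset.mem_filter, Finset.mem_Icc] at hi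
        rw [hT, Finset.mem_filter, Finset.mem_Icc]
        omega
      · intro j hjT hjim
        apply hzero
        apply hsupp
        rw [Finset.mem_Icc]
        intro hmem
        apply hjim
        rw [Finset.mem_image]
        refine ⟨j - 1, ?_, by ring⟩
        rw [hSe, Finset.mem_filter, Finset.mem_Icc]
        rw [hT, Finset.mem_filter, Finset.mem_Icc] at hjT
        omega
    have hR : ∑ j ∈ So, π j * d = ∑ j ∈ T, π j * d := by
      apply Finset.sum_subset
      · intro j hj
        rw [hSo, Finset.mem_filter, Finset.mem_Icc] at hj
        rw [hT, Finset.mem_filter, Finset.mem_Icc]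
        omega
      · intro j hjT hjSo
        have : π j = 0 := by
          apply hsupp
          rw [Finset.mem_Icc]
          intro hmem
          apply hjSo
          rw [hSo, Finset.mem_filter]
          rw [hT, Finset.mem_filter] at hjT
          exact ⟨Finset.mem_Icc.mpr hmem, hjT.2⟩
        rw [this, zero_mul]
    rw [hL, hR]
  have key2 : δ * η = ε * δ := by
    have h1 : δ * η = ∑ j ∈ So, π (j - 1) * δ := by
      rw [hη, Finset.mul_sum]
      exact Finset.sum_congr rfl fun j _ => hδ j
    have h2 : ε * δ = ∑ i ∈ Se, π i * δ := by rw [hε, Finset.sum_mul]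
    rw [h1, h2]
    have himg : ∑ j ∈ So.image (fun i => i - 1), π j * δ = ∑ i ∈ So, π (i - 1) * δ :=
      Finset.sum_image (by intro a _ b _ hab; have hab' : a - 1 = b - 1 := hab; omega)
    rw [← himg]
    set T : Finset ℤ := (Finset.Icc (p - 1) q).filter (fun j => j % 2 = 0) with hT
    have hzero : ∀ j, π (j + 1) = 0 → π j * δ = 0 := by
      intro j hj
      have h := hδ (j + 1)
      have h2 : j + 1 - 1 = j := by ring
      rw [h2, hj, mul_zero] at h
      exact h.symm
    have hL : ∑ j ∈ So.image (fun i => i - 1), π j * δ = ∑ j ∈ T, π j * δ := by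
      apply Finset.sum_subset
      · intro j hj
        rw [Finset.mem_image] at hj
        obtain ⟨i, hi, rfl⟩ := hj
        rw [hSo, Finset.mem_filter, Finset.mem_Icc] at hi
        rw [hT, Finset.mem_filter, Finset.mem_Icc]
        omega
      · intro j hjT hjim
        apply hzero
        apply hsupp
        rw [Finset.mem_Icc]
        intro hmem
        apply hjim
        rw [Finset.mem_image]
        refine ⟨j + 1, ?_, by ring⟩
        rw [hSo, Finset.mem_filter, Finset.mem_Icc]
        rw [hT, Finset.mem_filter, Finset.mem_Icc] at hjT
        omega
    have hR : ∑ j ∈ Se, π j * δ = ∑ j ∈ T, π j * δ := by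
      apply Finset.sum_subset
      · intro j hj
        rw [hSe, Finset.mem_filter, Finset.mem_Icc] at hj
        rw [hT, Finset.mem_filter, Finset.mem_Icc]
        omega
      · intro j hjT hjSe
        have : π j = 0 := by
          apply hsupp
          rw [Finset.mem_Icc]
          intro hmem
          apply hjSe
          rw [hSe, Finset.mem_filter]
          rw [hT, Finset.mem_filter] at hjT
          exact ⟨Finset.mem_Icc.mpr hmem, hjT.2⟩
        rw [this, zero_mul]
    rw [hL, hR]
  -- derived commutations
  have hη1ε : η = 1 - ε := by rw [← hεη]; abel
  have hε1η : ε = 1 - η := by rw [← hεη]; abel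
  have key1' : d * η = ε * d := by
    have h : d * ε + d * η = ε * d + η * d := by
      rw [← mul_add, ← add_mul, hεη, mul_one, one_mul]
    rw [key1, add_comm (ε * d) (η * d)] at h
    exact add_left_cancel h
  have key2' : δ * ε = η * δ := by
    have h : δ * ε + δ * η = ε * δ + η * δ := by
      rw [← mul_add, ← add_mul, hεη, mul_one, one_mul]
    rw [key2, add_comm (δ * ε) (ε * δ)] at h
    exact add_left_cancel h
  -- N = d + δ
  set N : Module.End ℂ V := d + δ with hN
  have hN2 : N * N = Δ := by
    rw [hN, hΔdef]
    simp only [mul_add, add_mul, hdd, hδδ]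
    abel
  have hNker : LinearMap.ker N = ⊥ := by
    rw [LinearMap.ker_eq_bot']
    intro x hx
    have hΔx : Δ x = 0 := by
      rw [← hN2]
      show N (N x) = 0
      rw [hx, map_zero]
    have hΔker : LinearMap.ker Δ = ⊥ := (LinearMap.isUnit_iff_ker_eq_bot Δ).mp ⟨u, hu⟩
    rw [LinearMap.ker_eq_bot'] at hΔker
    exact hΔker x hΔx
  have hNunit : IsUnit N := (LinearMap.isUnit_iff_ker_eq_bot N).mpr hNker
  obtain ⟨n, hn⟩ := hNunit
  have hNΔ : N * Δ = Δ * N := by rw [← hN2, mul_assoc]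
  have hNε : N * ε = η * N := by
    rw [hN, add_mul, mul_add, key1, key2']
  have hNη : N * η = ε * N := by
    rw [hN, add_mul, mul_add, key1', key2]
  have hconj : N * (Δ * η + ε) = (Δ * ε + η) * N := by
    calc N * (Δ * η + ε) = N * (Δ * η) + N * ε := mul_add _ _ _
      _ = (N * Δ) * η + η * N := by rw [← mul_assoc, hNε]
      _ = (Δ * N) * η + η * N := by rw [hNΔ]
      _ = Δ * (N * η) + η * N := by rw [mul_assoc]
      _ = Δ * (ε * N) + η * N := by rw [hNη]
      _ = (Δ * ε) * N + η * N := by rw [← mul_assoc]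
      _ = (Δ * ε + η) * N := (add_mul _ _ _).symm
  -- the two determinants agree
  have hdet_mul : ∀ (a b : Module.End ℂ V),
      LinearMap.det (a * b) = LinearMap.det a * LinearMap.det b := fun a b => map_mul _ a b
  have hdet_eq : LinearMap.det (Δ * η + ε) = LinearMap.det (Δ * ε + η) := by
    have h1 : (Δ * η + ε) = ((n⁻¹ : (Module.End ℂ V)ˣ) : Module.End ℂ V)
        * ((Δ * ε + η) * ((n : (Module.End ℂ V)ˣ) : Module.End ℂ V)) := by
      calc Δ * η + ε
          = (((n⁻¹ : (Module.End ℂ V)ˣ) : Module.End ℂ V) * n) * (Δ * η + ε) := by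
            rw [Units.inv_mul, one_mul]
        _ = ((n⁻¹ : (Module.End ℂ V)ˣ) : Module.End ℂ V) * (N * (Δ * η + ε)) := by
            rw [mul_assoc, hn]
        _ = ((n⁻¹ : (Module.End ℂ V)ˣ) : Module.End ℂ V) * ((Δ * ε + η) * N) := by
            rw [hconj]
        _ = ((n⁻¹ : (Module.End ℂ V)ˣ) : Module.End ℂ V)
            * ((Δ * ε + η) * ((n : (Module.End ℂ V)ˣ) : Module.End ℂ V)) := by rw [hn]
    rw [h1, hdet_mul, hdet_mul]
    have h2 : LinearMap.det ((n⁻¹ : (Module.End ℂ V)ˣ) : Module.End ℂ V)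
        * LinearMap.det ((n : (Module.End ℂ V)ˣ) : Module.End ℂ V) = 1 := by
      rw [← hdet_mul, Units.inv_mul]
      exact map_one LinearMap.det
    calc LinearMap.det ((n⁻¹ : (Module.End ℂ V)ˣ) : Module.End ℂ V)
          * (LinearMap.det (Δ * ε + η) * LinearMap.det ((n : (Module.End ℂ V)ˣ) : Module.End ℂ V))
        = (LinearMap.det ((n⁻¹ : (Module.End ℂ V)ˣ) : Module.End ℂ V)
          * LinearMap.det ((n : (Module.End ℂ V)ˣ) : Module.End ℂ V))
          * LinearMap.det (Δ * ε + η) := by ring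
      _ = LinearMap.det (Δ * ε + η) := by rw [h2, one_mul]
  -- det (Δ * η + ε) ≠ 0
  have hinv_prod : (Δ * η + ε) * (Δ' * η + ε) = 1 := by
    have t1 : (Δ * η) * (Δ' * η) = η := by
      calc (Δ * η) * (Δ' * η) = Δ * ((η * Δ') * η) := by rw [mul_assoc, ← mul_assoc η]
        _ = Δ * ((Δ' * η) * η) := by rw [hηΔ']
        _ = Δ * (Δ' * (η * η)) := by rw [mul_assoc]
        _ = (Δ * Δ') * η := by rw [hηη, mul_assoc]
        _ = η := by rw [hΔΔ', one_mul]
    have t2 : (Δ * η) * ε = 0 := by rw [mul_assoc, hηε0, mul_zero]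
    have t3 : ε * (Δ' * η) = 0 := by
      rw [← mul_assoc, hεΔ', mul_assoc, hεη0, mul_zero]
    calc (Δ * η + ε) * (Δ' * η + ε)
        = (Δ * η) * (Δ' * η) + (Δ * η) * ε + (ε * (Δ' * η) + ε * ε) := by
          rw [add_mul, mul_add, mul_add]
      _ = η + 0 + (0 + ε) := by rw [t1, t2, t3, hεε]
      _ = 1 := by rw [add_zero, zero_add, ← hεη, add_comm]
  have hdet_ne : LinearMap.det (Δ * η + ε) ≠ 0 := by
    have h := congrArg LinearMap.det hinv_prod
    rw [hdet_mul, map_one] at h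
    exact left_ne_zero_of_mul_eq_one h
  -- restriction determinants
  have hdetr : ∀ i, LinearMap.det (r i) = LinearMap.det (Δ * π i + 1 - π i) := by
    intro i
    exact aux_det_restrict (π i) Δ (hidem i) (r i) (hr i)
  -- product over a finset
  have lemC : ∀ S : Finset ℤ,
      LinearMap.det (Δ * (∑ i ∈ S, π i) + 1 - ∑ i ∈ S, π i)
        = ∏ i ∈ S, LinearMap.det (Δ * π i + 1 - π i) := by
    intro S
    induction S using Finset.induction_on with
    | empty => simp
    | insert _ _ ha ih =>
      rename_i a S'
      rw [Finset.sum_insert ha, Finset.prod_insert ha, ← ih]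
      set P : Module.End ℂ V := ∑ i ∈ S', π i with hPdef
      have hπP : π a * P = 0 := by
        rw [hPdef, Finset.mul_sum]
        apply Finset.sum_eq_zero
        intro j hj
        exact horth a j (by rintro rfl; exact ha hj)
      have z1 : π a * (Δ * P) = 0 := by
        rw [← mul_assoc, ← hΔπ a, mul_assoc, hπP, mul_zero]
      have hmul : (Δ * π a + 1 - π a) * (Δ * P + 1 - P) = Δ * (π a + P) + 1 - (π a + P) := by
        simp only [mul_add, add_mul, sub_mul, mul_sub, one_mul, mul_one, mul_assoc]
        rw [z1, hπP]
        simp only [mul_zero]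
        abel
      rw [← hmul, hdet_mul]
  -- split the product into even and odd parts
  have hsplit : ∏ i ∈ Finset.Icc p q, LinearMap.det (r i) ^ (Int.negOnePow i : ℤ)
      = (∏ i ∈ Se, LinearMap.det (r i) ^ (Int.negOnePow i : ℤ))
        * ∏ i ∈ So, LinearMap.det (r i) ^ (Int.negOnePow i : ℤ) := by
    exact (Finset.prod_filter_mul_prod_filter_not (Finset.Icc p q) (fun i => i % 2 = 0) _).symm
  have heven : ∏ i ∈ Se, LinearMap.det (r i) ^ (Int.negOnePow i : ℤ)
      = ∏ i ∈ Se, LinearMap.det (r i) := by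
    apply Finset.prod_congr rfl
    intro i hi
    rw [hSe, Finset.mem_filter] at hi
    rw [Int.negOnePow_even i (Int.even_iff.mpr hi.2)]
    norm_num
  have hodd : ∏ i ∈ So, LinearMap.det (r i) ^ (Int.negOnePow i : ℤ)
      = ∏ i ∈ So, (LinearMap.det (r i))⁻¹ := by
    apply Finset.prod_congr rfl
    intro i hi
    rw [hSo, Finset.mem_filter] at hi
    rw [Int.negOnePow_odd i (Int.odd_iff.mpr (by omega))]
    norm_num
  have hprodSe : ∏ i ∈ Se, LinearMap.det (r i) = LinearMap.det (Δ * ε + η) := by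
    calc ∏ i ∈ Se, LinearMap.det (r i) = ∏ i ∈ Se, LinearMap.det (Δ * π i + 1 - π i) :=
          Finset.prod_congr rfl fun i _ => hdetr i
      _ = LinearMap.det (Δ * ε + 1 - ε) := (lemC Se).symm
      _ = LinearMap.det (Δ * ε + η) := by rw [hη1ε, add_sub_assoc]
  have hprodSo : ∏ i ∈ So, LinearMap.det (r i) = LinearMap.det (Δ * η + ε) := by
    calc ∏ i ∈ So, LinearMap.det (r i) = ∏ i ∈ So, LinearMap.det (Δ * π i + 1 - π i) :=
          Finset.prod_congr rfl fun i _ => hdetr i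
      _ = LinearMap.det (Δ * η + 1 - η) := (lemC So).symm
      _ = LinearMap.det (Δ * η + ε) := by rw [hε1η, add_sub_assoc]
  rw [hsplit, heven, hodd, Finset.prod_inv_distrib, hprodSe, hprodSo, hdet_eq]
  exact mul_inv_cancel₀ (hdet_eq ▸ hdet_ne)
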